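/- Let q ∈ ℝ \ {0} and define, on the space C(P) of complex-valued functions on the weight lattice, the operator T̂ = q + χ·(s − 1), where s is a reflection acting on P, and χ(λ) takes the value q if the reflection hyperplane separates λ from the fundamental alcove, 1 if λ lies on the hyperplane, and q⁻¹ otherwise. Then T̂ satisfies the quadratic Hecke relation (T̂ − q)(T̂ + q⁻¹) = 0. -/

import Mathlib

noncomputable section

/-- The difference-reflection operator `T̂ = q + χ(s − 1)` on functions on the weight lattice:
`(T̂f)(λ) = q f(λ) + χ(λ)(f(sλ) − f(λ))`. -/
def That {P : Type*} (q : ℝ) (s : P → P) (χ : P → ℝ) (f : P → ℂ) : P → ℂ :=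
  fun lam => (q : ℂ) * f lam + (χ lam : ℂ) * (f (s lam) - f lam)

/-- Let `q ∈ ℝ \ {0}` and let `T̂ = q + χ(s − 1)` on the space of complex
functions on the weight lattice `P`, where `s` is an (affine simple) reflection acting on `P` and
`χ(λ)` equals `q` if the reflection hyperplane separates `λ` from the fundamental alcove, `1` if
`λ` lies on the hyperplane (equivalently, is fixed by `s`), and `q⁻¹` otherwise (so that
`χ(sλ) = χ(λ)⁻¹` off the hyperplane). Then `T̂` satisfies the quadratic Hecke relation
`(T̂ − q)(T̂ + q⁻¹) = 0`. -/
theorem statement2 {P : Type*} (q : ℝ) (hq : q ≠ 0)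
    (s : P → P) (hs : Function.Involutive s) (χ : P → ℝ)
    (hχ_fix : ∀ lam : P, s lam = lam → χ lam = 1)
    (hχ_off : ∀ lam : P, s lam ≠ lam →
      (χ lam = q ∨ χ lam = q⁻¹) ∧ χ (s lam) = (χ lam)⁻¹) :
    ∀ (f : P → ℂ) (lam : P),
      That q s χ (fun mu => That q s χ f mu + (q : ℂ)⁻¹ * f mu) lam -
        (q : ℂ) * (That q s χ f lam + (q : ℂ)⁻¹ * f lam) = 0 := by
  intro f lam
  have hqC : (q : ℂ) ≠ 0 := by exact_mod_cast hq
  simp only [That, hs lam]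
  by_cases h : s lam = lam
  · rw [hχ_fix lam h, h]
    push_cast
    field_simp
    ring
  · obtain ⟨hval, hinv⟩ := hχ_off lam h
    rw [hinv]
    rcases hval with hv | hv <;> rw [hv] <;> push_cast <;> field_simp <;> ring
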